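/- Let s > 0, a > 0 and f_a(y) = exp(−a√(s²+|y|²)) for y ∈ ℝ³. Then ∫_{ℝ³} f_a(y)² dy/√(s²+|y|²) = (4π/a²)·∫_{as}^∞ e^{−2x}·√(x² − (as)²) dx, and consequently a²·∫_{ℝ³} f_a(y)² dy/√(s²+|y|²) → π as a → 0⁺. -/

import Mathlib

open MeasureTheory Real Set Filter

private lemma sqrtpos {s : ℝ} (hs : 0 < s) (r : ℝ) : 0 < Real.sqrt (s ^ 2 + r ^ 2) :=
  Real.sqrt_pos.2 (by positivity)

/-- Spherical coordinates step. -/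
private lemma lemA (s a : ℝ) :
    ∫ y : EuclideanSpace ℝ (Fin 3),
        Real.exp (-a * Real.sqrt (s ^ 2 + ‖y‖ ^ 2)) ^ 2 / Real.sqrt (s ^ 2 + ‖y‖ ^ 2)
      = (4 * π) * ∫ r in Ioi (0:ℝ),
          r ^ 2 * (Real.exp (-a * Real.sqrt (s ^ 2 + r ^ 2)) ^ 2 / Real.sqrt (s ^ 2 + r ^ 2)) := by
  have key := MeasureTheory.integral_fun_norm_addHaar
    (volume : Measure (EuclideanSpace ℝ (Fin 3)))
    (fun t => Real.exp (-a * Real.sqrt (s ^ 2 + t ^ 2)) ^ 2 / Real.sqrt (s ^ 2 + t ^ 2))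
  have hvol : (volume (Metric.ball (0 : EuclideanSpace ℝ (Fin 3)) 1)).toReal = 4 * π / 3 := by
    rw [EuclideanSpace.volume_ball]
    have h1 : Real.Gamma ((Fintype.card (Fin 3) : ℝ) / 2 + 1) = 3 / 4 * Real.sqrt π := by
      rw [Fintype.card_fin]
      push_cast
      rw [show (3:ℝ)/2 + 1 = 3/2 + 1 by norm_num, Real.Gamma_add_one (by norm_num),
        show (3:ℝ)/2 = 1/2 + 1 by norm_num, Real.Gamma_add_one (by norm_num),
        Real.Gamma_one_half_eq]
      ring
    rw [h1]
    have h2 : Real.sqrt π ^ Fintype.card (Fin 3) = π * Real.sqrt π := by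
      rw [Fintype.card_fin, pow_succ, Real.sq_sqrt Real.pi_pos.le]
    rw [h2]
    have hsp : 0 < Real.sqrt π := Real.sqrt_pos.2 Real.pi_pos
    rw [ENNReal.ofReal_one, one_pow, one_mul, ENNReal.toReal_ofReal (by positivity)]
    field_simp
  rw [key, measureReal_def, hvol]
  rw [show Module.finrank ℝ (EuclideanSpace ℝ (Fin 3)) = 3 from finrank_euclideanSpace_fin]
  simp only [smul_eq_mul, nsmul_eq_mul]
  rw [← MeasureTheory.integral_const_mul, ← MeasureTheory.integral_const_mul, ← MeasureTheory.integral_const_mul]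
  refine MeasureTheory.setIntegral_congr_fun measurableSet_Ioi (fun r _ => ?_)
  push_cast
  ring

/-- Change of variables step. -/
private lemma lemB {s a : ℝ} (hs : 0 < s) (ha : 0 < a) :
    ∫ x in Ioi (a * s), Real.exp (-2 * x) * Real.sqrt (x ^ 2 - (a * s) ^ 2)
      = a ^ 2 * ∫ r in Ioi (0:ℝ),
          r ^ 2 * (Real.exp (-a * Real.sqrt (s ^ 2 + r ^ 2)) ^ 2 / Real.sqrt (s ^ 2 + r ^ 2)) := by
  set f : ℝ → ℝ := fun r => a * Real.sqrt (s ^ 2 + r ^ 2) with hf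
  have himg : f '' Ioi 0 = Ioi (a * s) := by
    ext x
    constructor
    · rintro ⟨r, hr, rfl⟩
      have : s < Real.sqrt (s ^ 2 + r ^ 2) := by
        rw [Real.lt_sqrt hs.le]
        nlinarith [mem_Ioi.1 hr]
      exact mem_Ioi.2 (by simpa [hf] using mul_lt_mul_of_pos_left this ha)
    · intro hx
      have hx' : a * s < x := mem_Ioi.1 hx
      have hxa : s < x / a := (lt_div_iff₀ ha).2 (by linarith [mul_comm a s])
      have hxa0 : 0 < x / a := lt_trans hs hxa
      refine ⟨Real.sqrt ((x / a) ^ 2 - s ^ 2), ?_, ?_⟩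
      · exact mem_Ioi.2 (Real.sqrt_pos.2 (by nlinarith))
      · have h1 : s ^ 2 + Real.sqrt ((x / a) ^ 2 - s ^ 2) ^ 2 = (x / a) ^ 2 := by
          rw [Real.sq_sqrt (by nlinarith)]; ring
        simp only [hf, h1, Real.sqrt_sq hxa0.le]
        field_simp
  have hderiv : ∀ r ∈ Ioi (0:ℝ),
      HasDerivWithinAt f (a * (r / Real.sqrt (s ^ 2 + r ^ 2))) (Ioi 0) r := by
    intro r _
    have h1 : HasDerivAt (fun r : ℝ => s ^ 2 + r ^ 2) (2 * r) r := by
      simpa using (hasDerivAt_pow 2 r).const_add (s ^ 2)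
    have h2 := (Real.hasDerivAt_sqrt (ne_of_gt (by positivity : (0:ℝ) < s ^ 2 + r ^ 2))).comp r h1
    have h3 := h2.const_mul a
    have : a * (1 / (2 * Real.sqrt (s ^ 2 + r ^ 2)) * (2 * r))
        = a * (r / Real.sqrt (s ^ 2 + r ^ 2)) := by
      have := (sqrtpos hs r).ne'
      field_simp
    rw [this] at h3
    exact h3.hasDerivWithinAt
  have hinj : InjOn f (Ioi 0) := by
    intro r1 h1 r2 h2 he
    have h1' := mem_Ioi.1 h1
    have h2' := mem_Ioi.1 h2
    have := mul_left_cancel₀ ha.ne' he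
    have := (Real.sqrt_inj (by positivity) (by positivity)).1 this
    nlinarith
  rw [← himg, MeasureTheory.integral_image_eq_integral_abs_deriv_smul measurableSet_Ioi hderiv hinj]
  rw [← MeasureTheory.integral_const_mul]
  refine MeasureTheory.setIntegral_congr_fun measurableSet_Ioi (fun r hr => ?_)
  have hr' : 0 < r := mem_Ioi.1 hr
  have ht : 0 < Real.sqrt (s ^ 2 + r ^ 2) := sqrtpos hs r
  have habs : |a * (r / Real.sqrt (s ^ 2 + r ^ 2))| = a * (r / Real.sqrt (s ^ 2 + r ^ 2)) :=
    abs_of_pos (by positivity)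
  have hsq : (f r) ^ 2 - (a * s) ^ 2 = (a * r) ^ 2 := by
    simp only [hf, mul_pow, Real.sq_sqrt (by positivity : (0:ℝ) ≤ s ^ 2 + r ^ 2)]
    ring
  have hexp : Real.exp (-2 * f r) = Real.exp (-a * Real.sqrt (s ^ 2 + r ^ 2)) ^ 2 := by
    rw [sq, ← Real.exp_add, hf]; ring_nf
  simp only [smul_eq_mul, habs, hsq, Real.sqrt_sq (by positivity : (0:ℝ) ≤ a * r), hexp]
  field_simp

private lemma hJ : IntegrableOn (fun x => Real.exp (-2 * x) * x) (Ioi (0:ℝ)) := by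
  have := integrableOn_rpow_mul_exp_neg_mul_rpow (by norm_num : (-1:ℝ) < 1)
    (by norm_num : (0:ℝ) < 1) (by norm_num : (0:ℝ) < 2)
  simp only [Real.rpow_one] at this
  exact this.congr_fun (fun x _ => mul_comm _ _) measurableSet_Ioi

private lemma hJval : ∫ x in Ioi (0:ℝ), Real.exp (-2 * x) * x = 1 / 4 := by
  have := Real.integral_rpow_mul_exp_neg_mul_Ioi (by norm_num : (0:ℝ) < 2)
    (by norm_num : (0:ℝ) < 2)
  have h1 : ∫ t in Ioi (0:ℝ), t ^ ((2:ℝ) - 1) * Real.exp (-(2 * t))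
      = ∫ x in Ioi (0:ℝ), Real.exp (-2 * x) * x := by
    refine MeasureTheory.setIntegral_congr_fun measurableSet_Ioi (fun t _ => ?_)
    rw [show (2:ℝ) - 1 = 1 by norm_num, Real.rpow_one, show -(2 * t) = -2 * t by ring, mul_comm]
  rw [h1] at this
  rw [this, Real.Gamma_two, mul_one,
    show (2:ℝ) = ((2:ℕ):ℝ) by norm_num, Real.rpow_natCast]
  norm_num

/-- Shift: the lower bound integral. -/
private lemma lemShift (b : ℝ) :
    ∫ x in Ioi b, Real.exp (-2 * x) * (x - b) = Real.exp (-2 * b) * (1 / 4) := by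
  have himg : (fun u : ℝ => u + b) '' Ioi 0 = Ioi b := by
    rw [Set.image_add_const_Ioi, zero_add]
  have hderiv : ∀ u ∈ Ioi (0:ℝ), HasDerivWithinAt (fun u : ℝ => u + b) 1 (Ioi 0) u :=
    fun u _ => ((hasDerivAt_id u).add_const b).hasDerivWithinAt
  have hinj : InjOn (fun u : ℝ => u + b) (Ioi 0) := fun x _ y _ h => add_left_injective b h
  rw [← himg, MeasureTheory.integral_image_eq_integral_abs_deriv_smul measurableSet_Ioi hderiv hinj]
  have : ∀ u ∈ Ioi (0:ℝ), |(1:ℝ)| • (Real.exp (-2 * (u + b)) * (u + b - b))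
      = Real.exp (-2 * b) * (Real.exp (-2 * u) * u) := by
    intro u _
    rw [abs_one, one_smul, show -2 * (u + b) = -2 * u + -2 * b by ring, Real.exp_add]
    ring
  rw [MeasureTheory.setIntegral_congr_fun measurableSet_Ioi this,
    MeasureTheory.integral_const_mul, hJval]

theorem stmt_19 (s : ℝ) (hs : 0 < s) :
    (∀ a : ℝ, 0 < a →
      ∫ y : EuclideanSpace ℝ (Fin 3),
          Real.exp (-a * Real.sqrt (s ^ 2 + ‖y‖ ^ 2)) ^ 2 / Real.sqrt (s ^ 2 + ‖y‖ ^ 2) =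
        (4 * Real.pi / a ^ 2) *
          ∫ x in Set.Ioi (a * s), Real.exp (-2 * x) * Real.sqrt (x ^ 2 - (a * s) ^ 2)) ∧
    Filter.Tendsto (fun a : ℝ => a ^ 2 *
        ∫ y : EuclideanSpace ℝ (Fin 3),
          Real.exp (-a * Real.sqrt (s ^ 2 + ‖y‖ ^ 2)) ^ 2 / Real.sqrt (s ^ 2 + ‖y‖ ^ 2))
      (nhdsWithin 0 (Set.Ioi 0)) (nhds Real.pi) := by
  have key : ∀ a : ℝ, 0 < a →
      (∫ y : EuclideanSpace ℝ (Fin 3),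
          Real.exp (-a * Real.sqrt (s ^ 2 + ‖y‖ ^ 2)) ^ 2 / Real.sqrt (s ^ 2 + ‖y‖ ^ 2)) =
        (4 * Real.pi / a ^ 2) *
          ∫ x in Set.Ioi (a * s), Real.exp (-2 * x) * Real.sqrt (x ^ 2 - (a * s) ^ 2) := by
    intro a ha
    rw [lemA s a, lemB hs ha]
    have ha2 : (a:ℝ) ^ 2 ≠ 0 := by positivity
    field_simp
  refine ⟨key, ?_⟩
  -- the integral over Ioi (a*s) tends to 1/4
  have hI : Tendsto (fun a : ℝ =>
      ∫ x in Ioi (a * s), Real.exp (-2 * x) * Real.sqrt (x ^ 2 - (a * s) ^ 2))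
      (nhdsWithin 0 (Ioi 0)) (nhds (1 / 4)) := by
    have hlow : Tendsto (fun a : ℝ => Real.exp (-2 * (a * s)) * (1 / 4))
        (nhdsWithin 0 (Ioi 0)) (nhds (1 / 4)) := by
      have hc : Continuous fun a : ℝ => Real.exp (-2 * (a * s)) * (1 / 4) := by continuity
      have h0 : Tendsto (fun a : ℝ => Real.exp (-2 * (a * s)) * (1 / 4))
          (nhdsWithin (0:ℝ) (Ioi 0)) (nhds (Real.exp (-2 * ((0:ℝ) * s)) * (1 / 4))) :=
        (hc.tendsto 0).mono_left nhdsWithin_le_nhds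
      simpa using h0
    refine tendsto_of_tendsto_of_tendsto_of_le_of_le' hlow tendsto_const_nhds ?_ ?_
    · -- lower bound
      filter_upwards [self_mem_nhdsWithin] with a ha
      have hb : 0 < a * s := mul_pos ha hs
      set b := a * s
      have hIb : IntegrableOn (fun x => Real.exp (-2 * x) * Real.sqrt (x ^ 2 - b ^ 2)) (Ioi b) := by
        refine ((hJ.mono_set (Ioi_subset_Ioi hb.le)).mono'
          ((Real.continuous_exp.comp (continuous_const.mul continuous_id)).mul
            (Real.continuous_sqrt.comp ((continuous_pow 2).sub continuous_const))).aestronglyMeasurable ?_)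
        refine (ae_restrict_iff' measurableSet_Ioi).2 (Eventually.of_forall fun x hx => ?_)
        have hx' : b < x := mem_Ioi.1 hx
        have h1 : Real.sqrt (x ^ 2 - b ^ 2) ≤ x := by
          calc Real.sqrt (x ^ 2 - b ^ 2) ≤ Real.sqrt (x ^ 2) :=
                Real.sqrt_le_sqrt (by nlinarith)
            _ = x := Real.sqrt_sq (by linarith)
        rw [Real.norm_eq_abs, abs_of_nonneg (by positivity)]
        exact mul_le_mul_of_nonneg_left h1 (Real.exp_pos _).le
      rw [← lemShift b]
      refine MeasureTheory.integral_mono_of_nonneg ?_ hIb ?_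
      · refine (ae_restrict_iff' measurableSet_Ioi).2 (Eventually.of_forall fun x hx => ?_)
        have := mem_Ioi.1 hx
        have : (0:ℝ) ≤ x - b := by linarith
        positivity
      · refine (ae_restrict_iff' measurableSet_Ioi).2 (Eventually.of_forall fun x hx => ?_)
        have hx' : b < x := mem_Ioi.1 hx
        have h1 : x - b ≤ Real.sqrt (x ^ 2 - b ^ 2) := by
          rw [Real.le_sqrt (by linarith) (by nlinarith)]
          nlinarith
        exact mul_le_mul_of_nonneg_left h1 (Real.exp_pos _).le
    · -- upper bound
      filter_upwards [self_mem_nhdsWithin] with a ha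
      have hb : 0 < a * s := mul_pos ha hs
      set b := a * s
      calc (∫ x in Ioi b, Real.exp (-2 * x) * Real.sqrt (x ^ 2 - b ^ 2))
          ≤ ∫ x in Ioi b, Real.exp (-2 * x) * x := by
            refine MeasureTheory.integral_mono_of_nonneg ?_
              (hJ.mono_set (Ioi_subset_Ioi hb.le)) ?_
            · exact (ae_restrict_iff' measurableSet_Ioi).2
                (Eventually.of_forall fun x _ => by positivity)
            · refine (ae_restrict_iff' measurableSet_Ioi).2
                (Eventually.of_forall fun x hx => ?_)
              have hx' : b < x := mem_Ioi.1 hx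
              have h1 : Real.sqrt (x ^ 2 - b ^ 2) ≤ x := by
                calc Real.sqrt (x ^ 2 - b ^ 2) ≤ Real.sqrt (x ^ 2) :=
                      Real.sqrt_le_sqrt (by nlinarith)
                  _ = x := Real.sqrt_sq (by linarith)
              exact mul_le_mul_of_nonneg_left h1 (Real.exp_pos _).le
        _ ≤ ∫ x in Ioi (0:ℝ), Real.exp (-2 * x) * x := by
            refine MeasureTheory.setIntegral_mono_set hJ ?_
              ((Ioi_subset_Ioi hb.le).eventuallyLE)
            exact (ae_restrict_iff' measurableSet_Ioi).2
              (Eventually.of_forall fun x hx => by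
                have := mem_Ioi.1 hx; positivity)
        _ = 1 / 4 := hJval
  have hmain := hI.const_mul (4 * Real.pi)
  have hval : (4 * Real.pi) * (1 / 4) = Real.pi := by ring
  rw [hval] at hmain
  refine Tendsto.congr' ?_ hmain
  filter_upwards [self_mem_nhdsWithin] with a ha
  rw [key a ha]
  have ha' : (0:ℝ) < a := ha
  have ha2 : (a:ℝ) ^ 2 ≠ 0 := by positivity
  field_simp
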